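/- arXiv:1709.09281 — 3 statements merged into one kernel-verified Lean document; each statement's English description precedes it below -/
import Mathlib

section
/- The tropicalization of a Laurent polynomial with nonnegative coefficients is well-defined on quotients: if f, g, f', g' are nonzero Laurent polynomials with nonnegative coefficients and f·g' = f'·g, then f^t - g^t = (f')^t - (g')^t as functions on Z^n. -/
open Finset

/-- Formal Laurent polynomials in `n` variables over `ℚ`. -/
abbrev Laurent (n : ℕ) := AddMonoidAlgebra ℚ (Fin n → ℤ)

/-- The tropicalization of a Laurent polynomial: `f^t(ξ) = max{⟨a,ξ⟩ : c_a ≠ 0}`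
(junk value `0` if `f = 0`). -/
noncomputable def trop {n : ℕ} (f : Laurent n) (ξ : Fin n → ℤ) : ℤ :=
  if h : f.coeff.support.Nonempty then f.coeff.support.sup' h (fun a => ∑ i, a i * ξ i) else 0

/-- `f` has nonnegative coefficients. -/
def Nonneg {n : ℕ} (f : Laurent n) : Prop := ∀ a, 0 ≤ f.coeff a

lemma mul_apply_pos {n : ℕ} (f g : Laurent n) (hfp : Nonneg f) (hgp : Nonneg g)
    {a b : Fin n → ℤ} (ha : 0 < f.coeff a) (hb : 0 < g.coeff b) : 0 < (f * g).coeff (a + b) := by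
  rw [AddMonoidAlgebra.coeff_mul]
  rw [Finsupp.sum]
  apply Finset.sum_pos'
  · intro i _
    rw [Finsupp.sum]
    apply Finset.sum_nonneg
    intro j _
    split
    · exact mul_nonneg (hfp i) (hgp j)
    · exact le_rfl
  · refine ⟨a, Finsupp.mem_support_iff.mpr ha.ne', ?_⟩
    rw [Finsupp.sum]
    apply Finset.sum_pos'
    · intro j _
      split
      · exact mul_nonneg (hfp a) (hgp j)
      · exact le_rfl
    · refine ⟨b, Finsupp.mem_support_iff.mpr hb.ne', ?_⟩
      rw [if_pos rfl]
      exact mul_pos ha hb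

lemma trop_mul {n : ℕ} (f g : Laurent n) (hf : f ≠ 0) (hg : g ≠ 0)
    (hfp : Nonneg f) (hgp : Nonneg g) (ξ : Fin n → ℤ) :
    trop (f * g) ξ = trop f ξ + trop g ξ := by
  classical
  set F : (Fin n → ℤ) → ℤ := fun a => ∑ i, a i * ξ i with hF
  have hFadd : ∀ a b : Fin n → ℤ, F (a + b) = F a + F b := by
    intro a b
    simp only [hF, ← Finset.sum_add_distrib]
    exact Finset.sum_congr rfl (fun i _ => by simp [add_mul])
  have hfs : f.coeff.support.Nonempty := Finsupp.support_nonempty_iff.mpr (AddMonoidAlgebra.coeff_eq_zero.not.mpr hf)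
  have hgs : g.coeff.support.Nonempty := Finsupp.support_nonempty_iff.mpr (AddMonoidAlgebra.coeff_eq_zero.not.mpr hg)
  obtain ⟨a, ha, haeq⟩ := Finset.exists_mem_eq_sup' hfs F
  obtain ⟨b, hb, hbeq⟩ := Finset.exists_mem_eq_sup' hgs F
  have hfa : 0 < f.coeff a := lt_of_le_of_ne (hfp a) (Finsupp.mem_support_iff.mp ha).symm
  have hgb : 0 < g.coeff b := lt_of_le_of_ne (hgp b) (Finsupp.mem_support_iff.mp hb).symm
  have hab : (a + b) ∈ (f * g).coeff.support :=
    Finsupp.mem_support_iff.mpr (mul_apply_pos f g hfp hgp hfa hgb).ne'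
  have hfgs : (f * g).coeff.support.Nonempty := ⟨_, hab⟩
  rw [trop, trop, trop, dif_pos hfs, dif_pos hgs, dif_pos hfgs]
  show (f * g).coeff.support.sup' hfgs F = f.coeff.support.sup' hfs F + g.coeff.support.sup' hgs F
  apply le_antisymm
  · apply Finset.sup'_le
    intro c hc
    have := AddMonoidAlgebra.support_coeff_mul_subset f g hc
    rw [Finset.mem_add] at this
    obtain ⟨a', ha', b', hb', rfl⟩ := this
    rw [hFadd]
    exact add_le_add (Finset.le_sup' F ha') (Finset.le_sup' F hb')
  · rw [haeq, hbeq, ← hFadd]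
    exact Finset.le_sup' F hab

/-- Tropicalization is well defined on quotients: if `f·g' = f'·g` for nonzero Laurent
polynomials with nonnegative coefficients, then `f^t - g^t = (f')^t - (g')^t`. -/
theorem stmt2 {n : ℕ} (f g f' g' : Laurent n)
    (hf : f ≠ 0) (hg : g ≠ 0) (hf' : f' ≠ 0) (hg' : g' ≠ 0)
    (hfp : Nonneg f) (hgp : Nonneg g) (hfp' : Nonneg f') (hgp' : Nonneg g')
    (h : f * g' = f' * g) :
    ∀ ξ : Fin n → ℤ, trop f ξ - trop g ξ = trop f' ξ - trop g' ξ := by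
  intro ξ
  have h1 := trop_mul f g' hf hg' hfp hgp' ξ
  have h2 := trop_mul f' g hf' hg hfp' hgp ξ
  rw [h] at h1
  rw [h2] at h1
  linarith
end

section
/- The composition of the positive rational map F(t_1,t_2) = (t_1t_2/(t_1+t_2), t_2^2/(t_1+t_2)) with the positive Laurent polynomial f = (t_1^3+t_2^3)(t_1+t_2)/t_2^2 equals t_1^2 - t_1t_2 + t_2^2, which has a negative coefficient. Hence composition with a positive birational equivalence need not preserve the property of being a Laurent polynomial with nonnegative coefficients. -/
open MvPolynomial

/-- The function field of the torus `(𝔾ₘ)²`. -/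
abbrev TorusField2 := FractionRing (MvPolynomial (Fin 2) ℚ)

noncomputable def t1 : TorusField2 :=
  algebraMap (MvPolynomial (Fin 2) ℚ) TorusField2 (X 0)
noncomputable def t2 : TorusField2 :=
  algebraMap (MvPolynomial (Fin 2) ℚ) TorusField2 (X 1)

/-- First component of the positive map `F`: `t₁t₂/(t₁+t₂)`. -/
noncomputable def F1 : TorusField2 := t1 * t2 / (t1 + t2)
/-- Second component of the positive map `F`: `t₂²/(t₁+t₂)`. -/
noncomputable def F2 : TorusField2 := t2 ^ 2 / (t1 + t2)

/-- Substituting the positive map `F(t₁,t₂) = (t₁t₂/(t₁+t₂), t₂²/(t₁+t₂))` into the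
positive function `f = (t₁³+t₂³)(t₁+t₂)/t₂²` yields `t₁² - t₁t₂ + t₂²`, a polynomial
with a negative coefficient (the coefficient of `t₁t₂` is `-1`).  Hence composing with
a positive birational equivalence need not preserve positivity of Laurent coefficients. -/
theorem stmt7 :
    (F1 ^ 3 + F2 ^ 3) * (F1 + F2) / F2 ^ 2 = t1 ^ 2 - t1 * t2 + t2 ^ 2 ∧
    ((X 0 ^ 2 - X 0 * X 1 + X 1 ^ 2 : MvPolynomial (Fin 2) ℚ).coeff
      (Finsupp.single 0 1 + Finsupp.single 1 1)) = -1 := by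

  have hinj : Function.Injective (algebraMap (MvPolynomial (Fin 2) ℚ) TorusField2) :=
    IsFractionRing.injective _ _
  have ht1 : t1 ≠ 0 := by
    simp only [t1]
    intro h
    have := hinj (h.trans (map_zero _).symm)
    exact X_ne_zero 0 this
  have ht2 : t2 ≠ 0 := by
    simp only [t2]
    intro h
    have := hinj (h.trans (map_zero _).symm)
    exact X_ne_zero 1 this
  have hsum : t1 + t2 ≠ 0 := by
    simp only [t1, t2, ← map_add]
    intro h
    have := hinj (h.trans (map_zero _).symm)
    have h0 : (X 0 + X 1 : MvPolynomial (Fin 2) ℚ).coeff (Finsupp.single 0 1) = 1 := by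
      simp [coeff_X', Finsupp.single_eq_single_iff]
    rw [this] at h0
    simp at h0
  constructor
  · rw [F1, F2]
    field_simp
    ring
  · rw [coeff_add, coeff_sub]
    rw [coeff_X_mul (Finsupp.single 1 1) 0 (X 1), coeff_X_pow, coeff_X_pow, coeff_X]
    rw [if_neg, if_pos rfl, if_neg]
    · norm_num
    · intro h
      have := DFunLike.congr_fun h 1
      simp at this
    · intro h
      have := DFunLike.congr_fun h 0
      simp at this
end

section
/- Exponential decay of dominated functions: let f be a Laurent polynomial in z_1,...,z_n weakly dominated by a potential Φ (each summand dominated). Then for every δ > 0 and every point (ξ, ν) with ξ in the open real cone C_Φ(R) and ν ∈ (S^1)^n, one has |f(e^{sξ_1+iν_1},...,e^{sξ_n+iν_n})| ≤ e^{-sδ'} for some δ' > 0 and all sufficiently large s; in particular f(e^{sξ+iν}) → 0 as s → ∞. -/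
open Finset Filter

/-- Real tropicalization of a formal Laurent polynomial (over `ℚ`):
`φ^t(ξ) = max{⟨a,ξ⟩ : φ_a ≠ 0}` for `ξ ∈ ℝⁿ` (junk value `0` if `φ = 0`). -/
noncomputable def tropR {n : ℕ} (φ : (Fin n → ℤ) →₀ ℚ) (ξ : Fin n → ℝ) : ℝ :=
  if h : φ.support.Nonempty then φ.support.sup' h (fun a => ∑ i, (a i : ℝ) * ξ i) else 0

/-- Evaluation of a Laurent polynomial `f` (complex coefficients) at the point
`(e^{sξ₁+iν₁}, …, e^{sξₙ+iνₙ})` of the complex torus. -/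
noncomputable def evalExp {n : ℕ} (f : (Fin n → ℤ) →₀ ℂ)
    (ξ : Fin n → ℝ) (ν : Fin n → ℝ) (s : ℝ) : ℂ :=
  ∑ a ∈ f.support, f a * Complex.exp (∑ i, (a i : ℂ) * (s * ξ i + Complex.I * ν i))

lemma evalExp_norm_le {n : ℕ} (f : (Fin n → ℤ) →₀ ℂ) (ξ ν : Fin n → ℝ) (s : ℝ) :
    ‖evalExp f ξ ν s‖ ≤ ∑ a ∈ f.support, ‖f a‖ * Real.exp (s * ∑ i, (a i : ℝ) * ξ i) := by
  refine (norm_sum_le _ _).trans (le_of_eq (Finset.sum_congr rfl fun a _ => ?_))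
  rw [norm_mul, Complex.norm_exp]
  congr 2
  rw [Complex.re_sum]
  rw [Finset.mul_sum]
  refine Finset.sum_congr rfl fun i _ => ?_
  simp [Complex.mul_re, Complex.add_re, Complex.add_im, Complex.mul_im]
  ring

/-- Exponential decay of dominated functions.  Let `Φ` be a potential given by ratios
`Φp k / Φq k` of positive Laurent polynomials, with open real cone
`C_Φ(ℝ) = {ξ : Φ^t(ξ) < 0}`, and let `f` be a Laurent polynomial each of whose
monomials is dominated by `Φ` (i.e. `⟨a,ξ⟩ < 0` on the cone for every `a` in the
support of `f`).  Then for every point `(ξ,ν)` with `ξ ∈ C_Φ(ℝ)` there is `δ' > 0` with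
`|f(e^{sξ+iν})| ≤ e^{-sδ'}` for all sufficiently large `s`; in particular
`f(e^{sξ+iν}) → 0` as `s → ∞`. -/
theorem stmt16 {n m : ℕ} (Φp Φq : Fin m → ((Fin n → ℤ) →₀ ℚ))
    (hΦp : ∀ k, Φp k ≠ 0) (hΦq : ∀ k, Φq k ≠ 0)
    (hΦpp : ∀ k a, 0 ≤ Φp k a) (hΦqp : ∀ k a, 0 ≤ Φq k a)
    (f : (Fin n → ℤ) →₀ ℂ)
    (hdom : ∀ a ∈ f.support, ∀ ξ : Fin n → ℝ,
      (∀ k, tropR (Φp k) ξ - tropR (Φq k) ξ < 0) → ∑ i, (a i : ℝ) * ξ i < 0) :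
    ∀ (ξ ν : Fin n → ℝ), (∀ k, tropR (Φp k) ξ - tropR (Φq k) ξ < 0) →
      (∃ δ' > (0 : ℝ), ∃ s₀ : ℝ, ∀ s ≥ s₀, ‖evalExp f ξ ν s‖ ≤ Real.exp (-(s * δ'))) ∧
      Tendsto (fun s => evalExp f ξ ν s) atTop (nhds 0) := by
  intro ξ ν hξ
  -- reduce tendsto to the bound
  suffices hb : ∃ δ' > (0 : ℝ), ∃ s₀ : ℝ, ∀ s ≥ s₀, ‖evalExp f ξ ν s‖ ≤ Real.exp (-(s * δ')) by
    refine ⟨hb, ?_⟩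
    obtain ⟨δ', hδ', s₀, hs₀⟩ := hb
    have hev : ∀ᶠ s in atTop, ‖evalExp f ξ ν s‖ ≤ Real.exp (-(s * δ')) := by
      filter_upwards [eventually_ge_atTop s₀] with s hs using hs₀ s hs
    have hten : Tendsto (fun s : ℝ => Real.exp (-(s * δ'))) atTop (nhds 0) := by
      have h : Tendsto (fun s : ℝ => -(s * δ')) atTop atBot :=
        tendsto_neg_atBot_iff.mpr (Tendsto.atTop_mul_const hδ' tendsto_id)
      exact Real.tendsto_exp_atBot.comp h
    exact squeeze_zero_norm' hev hten
  by_cases hfs : f.support.Nonempty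
  · set δ : ℝ := f.support.inf' hfs (fun a => -∑ i, (a i : ℝ) * ξ i) with hδdef
    have hδpos : 0 < δ := by
      rw [Finset.lt_inf'_iff]
      intro a ha
      have := hdom a ha ξ hξ
      linarith
    have hdle : ∀ a ∈ f.support, ∑ i, (a i : ℝ) * ξ i ≤ -δ := by
      intro a ha
      have : δ ≤ -∑ i, (a i : ℝ) * ξ i := Finset.inf'_le _ ha
      linarith
    set C : ℝ := ∑ a ∈ f.support, ‖f a‖ with hC
    have hCpos : 0 < C := by
      apply Finset.sum_pos
      · intro a ha
        simpa [norm_pos_iff] using (Finsupp.mem_support_iff.mp ha)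
      · exact hfs
    refine ⟨δ / 2, by linarith, max 0 (2 * Real.log C / δ), fun s hs => ?_⟩
    have hs0 : 0 ≤ s := le_trans (le_max_left _ _) hs
    have h1 : ‖evalExp f ξ ν s‖ ≤ C * Real.exp (-(s * δ)) := by
      refine (evalExp_norm_le f ξ ν s).trans ?_
      rw [hC, Finset.sum_mul]
      refine Finset.sum_le_sum fun a ha => ?_
      refine mul_le_mul_of_nonneg_left ?_ (norm_nonneg _)
      apply Real.exp_le_exp.mpr
      calc s * ∑ i, (a i : ℝ) * ξ i ≤ s * (-δ) := by
              exact mul_le_mul_of_nonneg_left (hdle a ha) hs0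
        _ = -(s * δ) := by ring
    refine h1.trans ?_
    have h2 : C ≤ Real.exp (s * δ / 2) := by
      rw [← Real.exp_log hCpos]
      apply Real.exp_le_exp.mpr
      have hs2 : 2 * Real.log C / δ ≤ s := le_trans (le_max_right _ _) hs
      rw [div_le_iff₀ hδpos] at hs2
      linarith
    calc C * Real.exp (-(s * δ)) ≤ Real.exp (s * δ / 2) * Real.exp (-(s * δ)) := by
          gcongr
      _ = Real.exp (-(s * (δ / 2))) := by rw [← Real.exp_add]; ring_nf
  · have hzero : ∀ s, evalExp f ξ ν s = 0 := by
      intro s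
      unfold evalExp
      rw [Finset.not_nonempty_iff_eq_empty.mp hfs, Finset.sum_empty]
    refine ⟨1, one_pos, 0, fun s hs => ?_⟩
    rw [hzero s]
    simp [Real.exp_pos _ |>.le]
end
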